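/- Let σ* be the star subdivision of a cone σ with respect to v = Star(σ), and let ρ_v be the ray through v. A collection C of rays of σ* all distinct from ρ_v is a primitive collection of σ* if and only if the corresponding collection of rays in the star fan Star(ρ_v) is a primitive collection. -/

import Mathlib

/-- The convex cone generated by a set `S ⊆ ℝⁿ`. -/
def coneGen {n : ℕ} (S : Set (Fin n → ℝ)) : Set (Fin n → ℝ) :=
  {x | ∃ (t : Finset (Fin n → ℝ)) (c : (Fin n → ℝ) → ℝ),
    ↑t ⊆ S ∧ (∀ y, 0 ≤ c y) ∧ x = ∑ y ∈ t, c y • y}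

/-- `τ` is a face of the cone `σ`. -/
def IsFaceOf {n : ℕ} (τ σ : Set (Fin n → ℝ)) : Prop :=
  τ ⊆ σ ∧ (∀ x ∈ τ, ∀ y ∈ τ, x + y ∈ τ) ∧ (∀ x ∈ τ, ∀ c : ℝ, 0 ≤ c → c • x ∈ τ) ∧
    (∀ x ∈ σ, ∀ y ∈ σ, x + y ∈ τ → x ∈ τ ∧ y ∈ τ)

/-- `μ` is a facet of the full-dimensional cone `σ ⊆ ℝⁿ`. -/
def IsFacetOf {n : ℕ} (μ σ : Set (Fin n → ℝ)) : Prop :=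
  IsFaceOf μ σ ∧ Module.finrank ℝ (Submodule.span ℝ μ) = n - 1

/-- The star subdivision `σ*` of the cone generated by `u`, with respect to `v`. -/
def starSubdiv {n k : ℕ} (u : Fin k → (Fin n → ℝ)) (v : Fin n → ℝ) :
    Set (Set (Fin n → ℝ)) :=
  {τ | ∃ μ : Set (Fin n → ℝ), IsFacetOf μ (coneGen (Set.range u)) ∧
    IsFaceOf τ (coneGen (μ ∪ {v}))}

/-- The rays (one-dimensional cones) of a fan `F`, in any real vector space. -/
def raysOf {V : Type*} [AddCommGroup V] [Module ℝ V] (F : Set (Set V)) : Set (Set V) :=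
  {ρ ∈ F | Module.finrank ℝ (Submodule.span ℝ ρ) = 1}

/-- A primitive collection of a fan `F`: a collection `C` of rays of `F` not all contained
in a single cone of `F`, every proper subcollection of which is contained in some cone
of `F`. -/
def IsPrimitiveCollection {V : Type*} [AddCommGroup V] [Module ℝ V]
    (F : Set (Set V)) (C : Set (Set V)) : Prop :=
  C ⊆ raysOf F ∧ ¬(∃ σ ∈ F, ∀ ρ ∈ C, ρ ⊆ σ) ∧ (∀ D ⊂ C, ∃ σ ∈ F, ∀ ρ ∈ D, ρ ⊆ σ)

/-- The star fan `Star(ρ_v)` of the ray through `v` in the star subdivision: the fan in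
`N_ℝ/⟨v⟩` consisting of the images of the cones of `σ*` containing `ρ_v`. -/
def starFanOf {n k : ℕ} (u : Fin k → (Fin n → ℝ)) (v : Fin n → ℝ) :
    Set (Set ((Fin n → ℝ) ⧸ Submodule.span ℝ {v})) :=
  {w | ∃ τ ∈ starSubdiv u v, coneGen {v} ⊆ τ ∧ w = (Submodule.span ℝ {v}).mkQ '' τ}

namespace Stmt2Aux

variable {n : ℕ}

lemma coneGen_min {S P : Set (Fin n → ℝ)}
    (h0 : (0 : Fin n → ℝ) ∈ P)
    (hadd : ∀ a ∈ P, ∀ b ∈ P, a + b ∈ P)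
    (hsmul : ∀ a ∈ P, ∀ c : ℝ, 0 ≤ c → c • a ∈ P)
    (hS : S ⊆ P) : coneGen S ⊆ P := by
  rintro x ⟨t, c, htS, hc, rfl⟩
  exact Finset.sum_induction _ (· ∈ P) (fun a b ha hb => hadd a ha b hb) h0
    (fun y hy => hsmul y (hS (htS hy)) (c y) (hc y))

lemma subset_coneGen {S : Set (Fin n → ℝ)} : S ⊆ coneGen S := by
  intro x hx
  exact ⟨{x}, fun _ => 1, by simpa using hx, fun _ => zero_le_one, by simp⟩

lemma zero_mem_coneGen {S : Set (Fin n → ℝ)} : (0 : Fin n → ℝ) ∈ coneGen S :=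
  ⟨∅, fun _ => 0, by simp, fun _ => le_rfl, by simp⟩

lemma smul_mem_coneGen {S : Set (Fin n → ℝ)} {x : Fin n → ℝ} (hx : x ∈ coneGen S)
    {c : ℝ} (hc : 0 ≤ c) : c • x ∈ coneGen S := by
  obtain ⟨t, a, htS, ha, rfl⟩ := hx
  refine ⟨t, fun y => c * a y, htS, fun y => mul_nonneg hc (ha y), ?_⟩
  rw [Finset.smul_sum]
  exact Finset.sum_congr rfl fun y _ => (smul_smul c (a y) y)

lemma add_mem_coneGen {S : Set (Fin n → ℝ)} {x y : Fin n → ℝ}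
    (hx : x ∈ coneGen S) (hy : y ∈ coneGen S) : x + y ∈ coneGen S := by
  classical
  obtain ⟨t, a, htS, ha, rfl⟩ := hx
  obtain ⟨s, b, hsS, hb, rfl⟩ := hy
  refine ⟨t ∪ s, fun z => (if z ∈ t then a z else 0) + (if z ∈ s then b z else 0),
    ?_, ?_, ?_⟩
  · intro z hz
    rcases Finset.mem_union.1 hz with h | h
    · exact htS h
    · exact hsS h
  · intro z
    have h1 : (0:ℝ) ≤ (if z ∈ t then a z else 0) := by split <;> simp [ha z]
    have h2 : (0:ℝ) ≤ (if z ∈ s then b z else 0) := by split <;> simp [hb z]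
    positivity
  · have e1 : ∑ z ∈ t ∪ s, (if z ∈ t then a z else 0) • z = ∑ z ∈ t, a z • z := by
      rw [show (fun z => (if z ∈ t then a z else 0) • z)
        = fun z => (if z ∈ t then a z • z else 0) from funext fun z => by split <;> simp]
      rw [Finset.sum_ite_mem, Finset.union_inter_cancel_left]
    have e2 : ∑ z ∈ t ∪ s, (if z ∈ s then b z else 0) • z = ∑ z ∈ s, b z • z := by
      rw [show (fun z => (if z ∈ s then b z else 0) • z)
        = fun z => (if z ∈ s then b z • z else 0) from funext fun z => by split <;> simp]
      rw [Finset.sum_ite_mem, Finset.union_inter_cancel_right]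
    simp only [← e1, ← e2, ← Finset.sum_add_distrib]
    exact Finset.sum_congr rfl fun z _ => (add_smul _ _ z).symm

lemma coneGen_mono {S T : Set (Fin n → ℝ)} (h : S ⊆ T) : coneGen S ⊆ coneGen T :=
  fun x ⟨t, c, htS, hc, hx⟩ => ⟨t, c, htS.trans h, hc, hx⟩

lemma coneGen_singleton {v : Fin n → ℝ} :
    coneGen {v} = {x | ∃ c : ℝ, 0 ≤ c ∧ x = c • v} := by
  apply Set.Subset.antisymm
  · refine coneGen_min ⟨0, le_rfl, by simp⟩ ?_ ?_ ?_
    · rintro a ⟨c, hc, rfl⟩ b ⟨d, hd, rfl⟩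
      exact ⟨c + d, by linarith, (add_smul c d v).symm⟩
    · rintro a ⟨c, hc, rfl⟩ e he
      refine ⟨e * c, mul_nonneg he hc, ?_⟩
      rw [smul_smul]
    · rintro x hx; rw [Set.mem_singleton_iff] at hx; subst hx
      exact ⟨1, zero_le_one, (one_smul ℝ _).symm⟩
  · rintro x ⟨c, hc, rfl⟩
    exact smul_mem_coneGen (subset_coneGen (Set.mem_singleton _)) hc

lemma coneGen_insert_zero {S : Set (Fin n → ℝ)} :
    coneGen (insert 0 S) = coneGen S := by
  apply Set.Subset.antisymm
  · refine coneGen_min zero_mem_coneGen (fun a ha b hb => add_mem_coneGen ha hb)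
      (fun a ha c hc => smul_mem_coneGen ha hc) ?_
    rintro x (rfl | hx)
    · exact zero_mem_coneGen
    · exact subset_coneGen hx
  · exact coneGen_mono (Set.subset_insert 0 S)

lemma IsFaceOf.self_coneGen {S : Set (Fin n → ℝ)} : IsFaceOf (coneGen S) (coneGen S) :=
  ⟨subset_rfl, fun _ hx _ hy => add_mem_coneGen hx hy,
   fun _ hx c hc => smul_mem_coneGen hx hc, fun _ hx _ hy _ => ⟨hx, hy⟩⟩

lemma IsFaceOf.zero_mem {τ σ : Set (Fin n → ℝ)} (h : IsFaceOf τ σ) {x : Fin n → ℝ}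
    (hx : x ∈ τ) : (0 : Fin n → ℝ) ∈ τ := by
  have := h.2.2.1 x hx 0 le_rfl
  simpa using this

variable {k : ℕ}

section Main
variable {u : Fin k → (Fin n → ℝ)} {v : Fin n → ℝ}

lemma sum_mem_sigma (s : Finset (Fin k)) : ∑ i ∈ s, u i ∈ coneGen (Set.range u) :=
  Finset.sum_induction _ (· ∈ coneGen (Set.range u))
    (fun _ _ ha hb => add_mem_coneGen ha hb) zero_mem_coneGen
    (fun i _ => subset_coneGen (Set.mem_range_self i))

lemma v_mem_sigma (hv : v = ∑ i, u i) : v ∈ coneGen (Set.range u) :=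
  hv ▸ sum_mem_sigma Finset.univ

lemma v_ne_zero (hu : ∀ i, u i ≠ 0)
    (hfull : Submodule.span ℝ (Set.range u) = ⊤)
    (hsc : ∀ x ∈ coneGen (Set.range u), -x ∈ coneGen (Set.range u) → x = 0)
    (hv : v = ∑ i, u i) (hn : 0 < n) : v ≠ 0 := by
  intro h0
  have hk : k ≠ 0 := by
    rintro rfl
    have : Set.range u = ∅ := Set.range_eq_empty u
    rw [this, Submodule.span_empty] at hfull
    have h1 : Module.finrank ℝ (⊥ : Submodule ℝ (Fin n → ℝ)) =
        Module.finrank ℝ (⊤ : Submodule ℝ (Fin n → ℝ)) := by rw [hfull]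
    rw [finrank_bot, finrank_top, Module.finrank_fin_fun] at h1
    omega
  have i0 : Fin k := ⟨0, Nat.pos_of_ne_zero hk⟩
  have hsum : u i0 + ∑ i ∈ Finset.univ.erase i0, u i = v := by
    rw [hv]; exact Finset.add_sum_erase _ _ (Finset.mem_univ i0)
  have hneg : -u i0 = ∑ i ∈ Finset.univ.erase i0, u i := by
    rw [h0] at hsum; linear_combination -hsum
  have h1 : u i0 ∈ coneGen (Set.range u) := subset_coneGen (Set.mem_range_self i0)
  have h2 : -u i0 ∈ coneGen (Set.range u) := hneg ▸ sum_mem_sigma _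
  exact hu i0 (hsc _ h1 h2)

lemma face_insert_zero
    (hsc : ∀ x ∈ coneGen (Set.range u), -x ∈ coneGen (Set.range u) → x = 0)
    {μ : Set (Fin n → ℝ)} (hμ : IsFaceOf μ (coneGen (Set.range u))) :
    IsFaceOf (insert 0 μ) (coneGen (Set.range u)) := by
  obtain ⟨hsub, hadd, hsmul, habs⟩ := hμ
  refine ⟨?_, ?_, ?_, ?_⟩
  · rintro x (rfl | hx)
    · exact zero_mem_coneGen
    · exact hsub hx
  · rintro x (rfl | hx) y (rfl | hy)
    · exact Or.inl (by simp)
    · exact Or.inr (by simpa using hy)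
    · exact Or.inr (by simpa using hx)
    · exact Or.inr (hadd x hx y hy)
  · rintro x (rfl | hx) c hc
    · simp
    · exact Or.inr (hsmul x hx c hc)
  · rintro x hx y hy (h0 | hm)
    · have hyx : -x = y := by linear_combination -h0
      have : x = 0 := hsc x hx (hyx ▸ hy)
      subst this
      simp_all
    · obtain ⟨h1, h2⟩ := habs x hx y hy hm
      exact ⟨Or.inr h1, Or.inr h2⟩

lemma v_not_mem_facet (hu : ∀ i, u i ≠ 0)
    (hfull : Submodule.span ℝ (Set.range u) = ⊤)
    (hv : v = ∑ i, u i) (hn : 0 < n)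
    {μ : Set (Fin n → ℝ)} (hμ : IsFacetOf μ (coneGen (Set.range u))) : v ∉ μ := by
  intro hvμ
  have hrange : Set.range u ⊆ μ := by
    rintro _ ⟨j, rfl⟩
    have hsum : u j + ∑ i ∈ Finset.univ.erase j, u i = v := by
      rw [hv]; exact Finset.add_sum_erase _ _ (Finset.mem_univ j)
    exact (hμ.1.2.2.2 (u j) (subset_coneGen (Set.mem_range_self j))
      (∑ i ∈ Finset.univ.erase j, u i) (sum_mem_sigma _) (hsum ▸ hvμ)).1
  have hspan : Submodule.span ℝ μ = ⊤ :=
    top_le_iff.1 (hfull ▸ Submodule.span_mono hrange)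
  have := hμ.2
  rw [hspan, finrank_top, Module.finrank_fin_fun] at this
  omega

lemma mem_coneK {μ : Set (Fin n → ℝ)}
    (hadd : ∀ x ∈ μ, ∀ y ∈ μ, x + y ∈ μ)
    (hsmul : ∀ x ∈ μ, ∀ c : ℝ, 0 ≤ c → c • x ∈ μ) {x : Fin n → ℝ} :
    x ∈ coneGen (μ ∪ {v}) ↔
      ∃ m, (m ∈ μ ∨ m = 0) ∧ ∃ c : ℝ, 0 ≤ c ∧ x = m + c • v := by
  constructor
  · intro hx
    refine coneGen_min (P := {x | ∃ m, (m ∈ μ ∨ m = 0) ∧ ∃ c : ℝ, 0 ≤ c ∧ x = m + c • v})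
      ⟨0, Or.inr rfl, 0, le_rfl, by simp⟩ ?_ ?_ ?_ hx
    · rintro a ⟨m1, hm1, c1, hc1, rfl⟩ b ⟨m2, hm2, c2, hc2, rfl⟩
      refine ⟨m1 + m2, ?_, c1 + c2, by linarith, by rw [add_smul]; abel⟩
      rcases hm1 with h1 | rfl
      · rcases hm2 with h2 | rfl
        · exact Or.inl (hadd m1 h1 m2 h2)
        · simpa using Or.inl h1
      · simpa using hm2
    · rintro a ⟨m1, hm1, c1, hc1, rfl⟩ e he
      refine ⟨e • m1, ?_, e * c1, mul_nonneg he hc1, by rw [smul_add, smul_smul]⟩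
      rcases hm1 with h1 | rfl
      · exact Or.inl (hsmul m1 h1 e he)
      · simp
    · rintro z (hz | rfl)
      · exact ⟨z, Or.inl hz, 0, le_rfl, by simp⟩
      · exact ⟨0, Or.inr rfl, 1, zero_le_one, by simp⟩
  · rintro ⟨m, hm, c, hc, rfl⟩
    have hmc : m ∈ coneGen (μ ∪ {v}) := by
      rcases hm with h | rfl
      · exact subset_coneGen (Or.inl h)
      · exact zero_mem_coneGen
    exact add_mem_coneGen hmc
      (smul_mem_coneGen (subset_coneGen (Or.inr rfl)) hc)

lemma coneK_subset_sigma (hv : v = ∑ i, u i) {μ : Set (Fin n → ℝ)}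
    (hμ : μ ⊆ coneGen (Set.range u)) :
    coneGen (μ ∪ {v}) ⊆ coneGen (Set.range u) := by
  refine coneGen_min zero_mem_coneGen (fun a ha b hb => add_mem_coneGen ha hb)
    (fun a ha c hc => smul_mem_coneGen ha hc) ?_
  rintro x (hx | rfl)
  · exact hμ hx
  · exact v_mem_sigma hv

lemma v_not_mem_span_facet (hu : ∀ i, u i ≠ 0)
    (hfull : Submodule.span ℝ (Set.range u) = ⊤)
    (hsc : ∀ x ∈ coneGen (Set.range u), -x ∈ coneGen (Set.range u) → x = 0)
    (hv : v = ∑ i, u i) (hn : 0 < n)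
    {μ : Set (Fin n → ℝ)} (hμ : IsFacetOf μ (coneGen (Set.range u))) :
    v ∉ Submodule.span ℝ μ := by
  intro hvs
  set μ' : Set (Fin n → ℝ) := insert 0 μ with hμ'
  have hface' := face_insert_zero hsc hμ.1
  have hvs' : v ∈ Submodule.span ℝ μ' := by
    rw [hμ', Submodule.span_insert_zero]; exact hvs
  have key : ∀ x ∈ Submodule.span ℝ μ', ∃ p ∈ μ', ∃ q ∈ μ', x = p - q := by
    intro x hx
    induction hx using Submodule.span_induction with
    | mem z hz => exact ⟨z, hz, 0, Or.inl rfl, by simp⟩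
    | zero => exact ⟨0, Or.inl rfl, 0, Or.inl rfl, by simp⟩
    | add a b _ _ iha ihb =>
        obtain ⟨p1, hp1, q1, hq1, rfl⟩ := iha
        obtain ⟨p2, hp2, q2, hq2, rfl⟩ := ihb
        exact ⟨p1 + p2, hface'.2.1 _ hp1 _ hp2, q1 + q2, hface'.2.1 _ hq1 _ hq2,
          by abel⟩
    | smul c a _ iha =>
        obtain ⟨p, hp, q, hq, rfl⟩ := iha
        rcases le_or_gt 0 c with hc | hc
        · exact ⟨c • p, hface'.2.2.1 _ hp c hc, c • q, hface'.2.2.1 _ hq c hc,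
            by rw [smul_sub]⟩
        · refine ⟨(-c) • q, hface'.2.2.1 _ hq (-c) (by linarith),
            (-c) • p, hface'.2.2.1 _ hp (-c) (by linarith), ?_⟩
          rw [smul_sub, neg_smul, neg_smul]; abel
  obtain ⟨p, hp, q, hq, hpq⟩ := key v hvs'
  have hvq : v + q = p := by linear_combination hpq
  have hqσ : q ∈ coneGen (Set.range u) := hface'.1 hq
  have hvμ' : v ∈ μ' := (hface'.2.2.2 v (v_mem_sigma hv) q hqσ (hvq ▸ hp)).1
  rcases hvμ' with h0 | hm
  · exact v_ne_zero hu hfull hsc hv hn h0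
  · exact v_not_mem_facet hu hfull hv hn hμ hm

def rayset (w : Fin n → ℝ) : Set (Fin n → ℝ) := {x | ∃ c : ℝ, 0 ≤ c ∧ x = c • w}

lemma mem_rayset_self {w : Fin n → ℝ} : w ∈ rayset w := ⟨1, zero_le_one, (one_smul ℝ w).symm⟩

lemma smul_mem_rayset {w : Fin n → ℝ} {c : ℝ} (hc : 0 ≤ c) : c • w ∈ rayset w := ⟨c, hc, rfl⟩

lemma rayset_eq_of_mem {w x : Fin n → ℝ} (hx : x ∈ rayset w) (hx0 : x ≠ 0) :
    rayset w = rayset x := by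
  obtain ⟨e, he, rfl⟩ := hx
  have he0 : e ≠ 0 := fun h => hx0 (by rw [h, zero_smul])
  ext z
  constructor
  · rintro ⟨c, hc, rfl⟩
    exact ⟨c * e⁻¹, mul_nonneg hc (inv_nonneg.2 he), by
      rw [smul_smul, mul_assoc, inv_mul_cancel₀ he0, mul_one]⟩
  · rintro ⟨c, hc, rfl⟩
    exact ⟨c * e, mul_nonneg hc he, by rw [smul_smul]⟩

lemma coneGen_singleton_eq_rayset {w : Fin n → ℝ} : coneGen {w} = rayset w :=
  coneGen_singleton

lemma tau_subset_sigma (hv : v = ∑ i, u i) {τ : Set (Fin n → ℝ)}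
    (hτ : τ ∈ starSubdiv u v) : τ ⊆ coneGen (Set.range u) := by
  obtain ⟨μ, hμ, hface⟩ := hτ
  exact hface.1.trans (coneK_subset_sigma hv hμ.1.1)

lemma ray_structure
    (hsc : ∀ x ∈ coneGen (Set.range u), -x ∈ coneGen (Set.range u) → x = 0)
    (hv : v = ∑ i, u i) {ρ : Set (Fin n → ℝ)}
    (hρ : ρ ∈ raysOf (starSubdiv u v)) :
    ∃ w, w ≠ 0 ∧ w ∈ ρ ∧ ρ = rayset w := by
  obtain ⟨hmem, hrank⟩ := hρ
  have hρσ : ρ ⊆ coneGen (Set.range u) := tau_subset_sigma hv hmem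
  obtain ⟨μ, hμ, hface⟩ := hmem
  have hex : ∃ w ∈ ρ, w ≠ 0 := by
    by_contra h
    push_neg at h
    have hsub : ρ ⊆ ({0} : Set (Fin n → ℝ)) := fun x hx => h x hx
    have : Submodule.span ℝ ρ ≤ ⊥ := by
      rw [← Submodule.span_zero_singleton (R := ℝ) (M := Fin n → ℝ)]
      exact Submodule.span_mono hsub
    rw [le_bot_iff] at this
    rw [this, finrank_bot] at hrank
    omega
  obtain ⟨w, hwρ, hw0⟩ := hex
  have hspan : Submodule.span ℝ {w} = Submodule.span ℝ ρ := by
    refine Submodule.eq_of_le_of_finrank_le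
      (Submodule.span_mono (Set.singleton_subset_iff.2 hwρ)) ?_
    rw [hrank, finrank_span_singleton hw0]
  refine ⟨w, hw0, hwρ, ?_⟩
  ext x
  constructor
  · intro hx
    have : x ∈ Submodule.span ℝ {w} := hspan ▸ Submodule.subset_span hx
    obtain ⟨c, rfl⟩ := Submodule.mem_span_singleton.1 this
    refine ⟨c, ?_, rfl⟩
    by_contra hcneg
    push_neg at hcneg
    have hneg : -(c • w) ∈ coneGen (Set.range u) := by
      have : -(c • w) = (-c) • w := by rw [neg_smul]
      rw [this]
      exact smul_mem_coneGen (hρσ hwρ) (by linarith)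
    have := hsc _ (hρσ hx) hneg
    rw [smul_eq_zero] at this
    rcases this with h | h
    · exact absurd h (by linarith)
    · exact hw0 h
  · rintro ⟨c, hc, rfl⟩
    exact hface.2.2.1 w hwρ c hc

lemma ray_w_not_mem_span_v
    (hsc : ∀ x ∈ coneGen (Set.range u), -x ∈ coneGen (Set.range u) → x = 0)
    (hv : v = ∑ i, u i) {ρ : Set (Fin n → ℝ)} {w : Fin n → ℝ}
    (hρ : ρ ∈ raysOf (starSubdiv u v)) (hρv : ρ ≠ coneGen {v})
    (hw0 : w ≠ 0) (hwρ : w ∈ ρ) (hray : ρ = rayset w) :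
    w ∉ Submodule.span ℝ ({v} : Set (Fin n → ℝ)) := by
  intro hmem
  obtain ⟨a, rfl⟩ := Submodule.mem_span_singleton.1 hmem
  have ha0 : a ≠ 0 := fun h => hw0 (by rw [h, zero_smul])
  have hρσ : ρ ⊆ coneGen (Set.range u) := tau_subset_sigma hv hρ.1
  have hapos : 0 < a := by
    rcases lt_or_gt_of_ne ha0 with h | h
    · exfalso
      have h1 : a • v ∈ coneGen (Set.range u) := hρσ hwρ
      have h2 : -(a • v) ∈ coneGen (Set.range u) := by
        have : -(a • v) = (-a) • v := by rw [neg_smul]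
        rw [this]
        exact smul_mem_coneGen (v_mem_sigma hv) (by linarith)
      exact hw0 (hsc _ h1 h2)
    · exact h
  have hvρ : v ∈ ρ := by
    rw [hray]
    exact ⟨a⁻¹, inv_nonneg.2 hapos.le, by
      rw [smul_smul, inv_mul_cancel₀ ha0, one_smul]⟩
  have hvne : v ≠ 0 := by
    intro h
    exact hw0 (by rw [h, smul_zero])
  have : ρ = coneGen {v} := by
    rw [hray, rayset_eq_of_mem (x := v) ?_ hvne, coneGen_singleton_eq_rayset]
    rw [hray] at hvρ
    exact hvρ
  exact hρv this

lemma absorb (hu : ∀ i, u i ≠ 0)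
    (hfull : Submodule.span ℝ (Set.range u) = ⊤)
    (hsc : ∀ x ∈ coneGen (Set.range u), -x ∈ coneGen (Set.range u) → x = 0)
    (hv : v = ∑ i, u i) (hn : 0 < n)
    {μ τ : Set (Fin n → ℝ)} (hμ : IsFacetOf μ (coneGen (Set.range u)))
    (hτ : IsFaceOf τ (coneGen (μ ∪ {v})))
    {x : Fin n → ℝ} {s : ℝ} (hx : x ∈ coneGen (Set.range u)) (hs : 0 ≤ s)
    (hmem : x + s • v ∈ τ) : x ∈ τ := by
  have hface' := face_insert_zero hsc hμ.1
  have hKeq : coneGen (insert 0 μ ∪ {v}) = coneGen (μ ∪ {v}) := by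
    rw [Set.insert_union, coneGen_insert_zero]
  have hdec := (mem_coneK (v := v) (μ := insert 0 μ) hface'.2.1 hface'.2.2.1
    (x := x + s • v)).1 (by rw [hKeq]; exact hτ.1 hmem)
  obtain ⟨m, hm, c, hc, heq⟩ := hdec
  have hmμ' : m ∈ insert 0 μ := by
    rcases hm with h | rfl
    · exact h
    · exact Or.inl rfl
  rcases le_or_gt s c with hsc' | hcs
  · have hx2 : x = m + (c - s) • v := by
      have h1 : x = m + c • v - s • v := eq_sub_of_add_eq heq
      rw [h1, sub_smul]
      abel
    have hxK : x ∈ coneGen (μ ∪ {v}) := by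
      rw [← hKeq]
      exact (mem_coneK hface'.2.1 hface'.2.2.1).2 ⟨m, Or.inl hmμ', c - s, by linarith, hx2⟩
    have hsvK : s • v ∈ coneGen (μ ∪ {v}) := by
      rw [← hKeq]
      exact (mem_coneK hface'.2.1 hface'.2.2.1).2 ⟨0, Or.inr rfl, s, hs, by simp⟩
    exact (hτ.2.2.2 x hxK (s • v) hsvK hmem).1
  · have hx2 : x + (s - c) • v = m := by
      have h1 : x = m + c • v - s • v := eq_sub_of_add_eq heq
      rw [sub_smul, h1]
      abel
    rcases hmμ' with rfl | hmμ
    · have hneg : -x ∈ coneGen (Set.range u) := by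
        have hxeq : x = -((s - c) • v) := eq_neg_of_add_eq_zero_left hx2
        have hnx : -x = (s - c) • v := by rw [hxeq, neg_neg]
        rw [hnx]
        exact smul_mem_coneGen (v_mem_sigma hv) (by linarith)
      have hx0 : x = 0 := hsc x hx hneg
      rw [hx0]
      exact IsFaceOf.zero_mem hτ hmem
    · have hsvσ : (s - c) • v ∈ coneGen (Set.range u) :=
        smul_mem_coneGen (v_mem_sigma hv) (by linarith)
      have habs := hμ.1.2.2.2 x hx ((s - c) • v) hsvσ (hx2 ▸ hmμ)
      have hvμ : v ∈ μ := by
        have h1 : (s - c)⁻¹ • ((s - c) • v) ∈ μ :=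
          hμ.1.2.2.1 _ habs.2 _ (inv_nonneg.2 (by linarith))
        rwa [smul_smul, inv_mul_cancel₀ (by linarith : s - c ≠ 0), one_smul] at h1
      exact absurd hvμ (v_not_mem_facet hu hfull hv hn hμ)

lemma bigK_mem {μ : Set (Fin n → ℝ)} (hμ : IsFacetOf μ (coneGen (Set.range u))) :
    coneGen (μ ∪ {v}) ∈ starSubdiv u v :=
  ⟨μ, hμ, IsFaceOf.self_coneGen⟩

lemma rhov_subset_bigK {μ : Set (Fin n → ℝ)} :
    coneGen {v} ⊆ coneGen (μ ∪ {v}) :=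
  coneGen_mono (Set.singleton_subset_iff.2 (Or.inr rfl))

lemma hn_of_ray {ρ : Set (Fin n → ℝ)} (hρ : ρ ∈ raysOf (starSubdiv u v)) : 0 < n := by
  have h1 := Submodule.finrank_le (Submodule.span ℝ ρ)
  rw [hρ.2, Module.finrank_fin_fun] at h1
  omega

lemma ray_subset_of_image_subset (hu : ∀ i, u i ≠ 0)
    (hfull : Submodule.span ℝ (Set.range u) = ⊤)
    (hsc : ∀ x ∈ coneGen (Set.range u), -x ∈ coneGen (Set.range u) → x = 0)
    (hv : v = ∑ i, u i)
    {ρ τ : Set (Fin n → ℝ)} (hρ : ρ ∈ raysOf (starSubdiv u v))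
    (hτs : τ ∈ starSubdiv u v) (hvτ : coneGen {v} ⊆ τ)
    (him : (Submodule.span ℝ {v}).mkQ '' ρ ⊆ (Submodule.span ℝ {v}).mkQ '' τ) :
    ρ ⊆ τ := by
  obtain ⟨w, hw0, hwρ, hray⟩ := ray_structure hsc hv hρ
  have hn : 0 < n := hn_of_ray hρ
  obtain ⟨μ, hμ, hτface⟩ := hτs
  have hρσ : ρ ⊆ coneGen (Set.range u) := tau_subset_sigma hv hρ.1
  obtain ⟨t, htτ, hts⟩ := him ⟨w, hwρ, rfl⟩
  rw [Submodule.mkQ_apply, Submodule.mkQ_apply, Submodule.Quotient.eq] at hts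
  obtain ⟨a, hav⟩ := Submodule.mem_span_singleton.1 hts
  have hvτ' : v ∈ τ := hvτ (subset_coneGen (Set.mem_singleton v))
  have hwτ : w ∈ τ := by
    rcases le_or_gt a 0 with ha | ha
    · have hw : w = t + (-a) • v := by
        rw [neg_smul, sub_eq_iff_eq_add.1 hav.symm]; abel
      rw [hw]
      exact hτface.2.1 t htτ _ (hτface.2.2.1 v hvτ' (-a) (by linarith))
    · have ht : w + a • v = t := by
        rw [sub_eq_iff_eq_add.1 hav.symm]; abel
      exact absorb hu hfull hsc hv hn hμ hτface (hρσ hwρ) ha.le (ht ▸ htτ)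
  intro x hx
  rw [hray] at hx
  obtain ⟨c, hc, rfl⟩ := hx
  exact hτface.2.2.1 w hwτ c hc

lemma ray_image_inj (hu : ∀ i, u i ≠ 0)
    (hfull : Submodule.span ℝ (Set.range u) = ⊤)
    (hsc : ∀ x ∈ coneGen (Set.range u), -x ∈ coneGen (Set.range u) → x = 0)
    (hv : v = ∑ i, u i)
    {ρ ρ' : Set (Fin n → ℝ)} (hρ : ρ ∈ raysOf (starSubdiv u v))
    (hρ' : ρ' ∈ raysOf (starSubdiv u v))
    (hρv : ρ ≠ coneGen {v}) (hρ'v : ρ' ≠ coneGen {v})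
    (him : (Submodule.span ℝ {v}).mkQ '' ρ = (Submodule.span ℝ {v}).mkQ '' ρ') :
    ρ = ρ' := by
  obtain ⟨w0, hw00, hw0ρ, hray0⟩ := ray_structure hsc hv hρ
  obtain ⟨w1, hw10, hw1ρ, hray1⟩ := ray_structure hsc hv hρ'
  have hn : 0 < n := hn_of_ray hρ
  have hρσ : ρ ⊆ coneGen (Set.range u) := tau_subset_sigma hv hρ.1
  have hρ'σ : ρ' ⊆ coneGen (Set.range u) := tau_subset_sigma hv hρ'.1
  have hwv : w0 ∉ Submodule.span ℝ ({v} : Set (Fin n → ℝ)) :=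
    ray_w_not_mem_span_v hsc hv hρ hρv hw00 hw0ρ hray0
  have hmem : (Submodule.span ℝ {v}).mkQ w0 ∈ (Submodule.span ℝ {v}).mkQ '' ρ' :=
    him ▸ ⟨w0, hw0ρ, rfl⟩
  obtain ⟨x, hxρ', hxs⟩ := hmem
  rw [Submodule.mkQ_apply, Submodule.mkQ_apply, Submodule.Quotient.eq] at hxs
  obtain ⟨a, hav⟩ := Submodule.mem_span_singleton.1 hxs
  obtain ⟨μ, hμ, hρface⟩ := hρ.1
  obtain ⟨μ', hμ', hρ'face⟩ := hρ'.1
  rcases le_or_gt a 0 with ha | ha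
  · -- x + (-a) • v = w0 ∈ ρ, so x ∈ ρ
    have hx2 : x + (-a) • v = w0 := by
      rw [neg_smul, sub_eq_iff_eq_add.1 hav.symm]; abel
    have hxρ : x ∈ ρ :=
      absorb hu hfull hsc hv hn hμ hρface (hρ'σ hxρ') (by linarith)
        (hx2 ▸ hw0ρ)
    have hx0 : x ≠ 0 := by
      rintro rfl
      apply hwv
      rw [Submodule.mem_span_singleton]
      refine ⟨-a, ?_⟩
      have : (0 : Fin n → ℝ) + (-a) • v = w0 := hx2
      rw [zero_add] at this
      exact this
    rw [hray0, hray1]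
    rw [hray0] at hxρ
    rw [hray1] at hxρ'
    rw [rayset_eq_of_mem hxρ hx0, rayset_eq_of_mem hxρ' hx0]
  · -- w0 + a • v = x ∈ ρ', so w0 ∈ ρ'
    have hx2 : w0 + a • v = x := by
      rw [sub_eq_iff_eq_add.1 hav.symm]; abel
    have hw0ρ' : w0 ∈ ρ' :=
      absorb hu hfull hsc hv hn hμ' hρ'face (hρσ hw0ρ) ha.le (hx2 ▸ hxρ')
    rw [hray0, hray1]
    rw [hray1] at hw0ρ'
    rw [rayset_eq_of_mem hw0ρ' hw00]

lemma mkQ_v_smul_zero (c : ℝ) :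
    (Submodule.span ℝ {v}).mkQ (c • v) = 0 := by
  rw [Submodule.mkQ_apply, Submodule.Quotient.mk_eq_zero]
  exact Submodule.smul_mem _ c (Submodule.subset_span (Set.mem_singleton v))

lemma image_ray_mem (hu : ∀ i, u i ≠ 0)
    (hfull : Submodule.span ℝ (Set.range u) = ⊤)
    (hsc : ∀ x ∈ coneGen (Set.range u), -x ∈ coneGen (Set.range u) → x = 0)
    (hv : v = ∑ i, u i)
    {ρ : Set (Fin n → ℝ)} (hρ : ρ ∈ raysOf (starSubdiv u v))
    (hρv : ρ ≠ coneGen {v}) :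
    (Submodule.span ℝ {v}).mkQ '' ρ ∈ raysOf (starFanOf u v) := by
  obtain ⟨w0, hw00, hw0ρ, hray⟩ := ray_structure hsc hv hρ
  have hn : 0 < n := hn_of_ray hρ
  have hwv : w0 ∉ Submodule.span ℝ ({v} : Set (Fin n → ℝ)) :=
    ray_w_not_mem_span_v hsc hv hρ hρv hw00 hw0ρ hray
  obtain ⟨μ, hμ, hρface⟩ := hρ.1
  have hface' := face_insert_zero hsc hμ.1
  have hKeq : coneGen (insert 0 μ ∪ {v}) = coneGen (μ ∪ {v}) := by
    rw [Set.insert_union, coneGen_insert_zero]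
  have hdecomp : ∀ z ∈ coneGen (μ ∪ {v}),
      ∃ m ∈ insert 0 μ, ∃ c : ℝ, 0 ≤ c ∧ z = m + c • v := by
    intro z hz
    obtain ⟨m, hm, c, hc, hzeq⟩ := (mem_coneK (v := v) (μ := insert 0 μ)
      hface'.2.1 hface'.2.2.1).1 (by rw [hKeq]; exact hz)
    refine ⟨m, ?_, c, hc, hzeq⟩
    rcases hm with h | rfl
    · exact h
    · exact Or.inl rfl
  have hdecomp' : ∀ (m : Fin n → ℝ), m ∈ insert 0 μ → ∀ c : ℝ, 0 ≤ c →
      m + c • v ∈ coneGen (μ ∪ {v}) := by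
    intro m hm c hc
    rw [← hKeq]
    exact (mem_coneK hface'.2.1 hface'.2.2.1).2 ⟨m, Or.inl hm, c, hc, rfl⟩
  have hμsub : (insert 0 μ : Set (Fin n → ℝ)) ⊆ coneGen (μ ∪ {v}) := by
    intro m hm
    have := hdecomp' m hm 0 le_rfl
    simpa using this
  have hμspan : (insert 0 μ : Set (Fin n → ℝ)) ⊆ (Submodule.span ℝ μ : Set (Fin n → ℝ)) := by
    rintro m (rfl | hm)
    · exact Submodule.zero_mem _
    · exact Submodule.subset_span hm
  set τρ : Set (Fin n → ℝ) := {x | ∃ r ∈ ρ, ∃ c : ℝ, 0 ≤ c ∧ x = r + c • v} with hτρ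
  have h0ρ : (0 : Fin n → ℝ) ∈ ρ := IsFaceOf.zero_mem hρface hw0ρ
  have hρsubτ : ρ ⊆ τρ := fun r hr => ⟨r, hr, 0, le_rfl, by simp⟩
  have hτface : IsFaceOf τρ (coneGen (μ ∪ {v})) := by
    refine ⟨?_, ?_, ?_, ?_⟩
    · rintro x ⟨r, hr, c, hc, rfl⟩
      refine add_mem_coneGen (hρface.1 hr) ?_
      simpa using hdecomp' 0 (Or.inl rfl) c hc
    · rintro x ⟨r, hr, c, hc, rfl⟩ y ⟨r', hr', c', hc', rfl⟩
      refine ⟨r + r', hρface.2.1 r hr r' hr', c + c', by linarith, ?_⟩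
      rw [add_smul]; abel
    · rintro x ⟨r, hr, c, hc, rfl⟩ e he
      refine ⟨e • r, hρface.2.2.1 r hr e he, e * c, mul_nonneg he hc, ?_⟩
      rw [smul_add, smul_smul]
    · rintro x hxK y hyK ⟨r, hr, c, hc, hsum⟩
      obtain ⟨m1, hm1, a, ha, hxe⟩ := hdecomp x hxK
      obtain ⟨m2, hm2, b, hb, hye⟩ := hdecomp y hyK
      obtain ⟨m3, hm3, d, hd, hre⟩ := hdecomp r (hρface.1 hr)
      -- key scalar relation
      have hkey : (a + b - c - d) • v = m3 - m1 - m2 := by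
        have er : r = x + y - c • v := by rw [hsum]; abel
        rw [sub_smul, sub_smul, add_smul]
        have e3 : m3 = r - d • v := by rw [hre]; abel
        rw [e3, er, hxe, hye]
        abel
      -- d = 0 via face absorption of ρ
      have habs3 := hρface.2.2.2 m3 (hμsub hm3)
        (d • v) (by simpa using hdecomp' 0 (Or.inl rfl) d hd) (hre ▸ hr)
      have hd0 : d = 0 := by
        by_contra hdne
        have hvρ : v ∈ ρ := by
          have h1 : d⁻¹ • (d • v) ∈ ρ :=
            hρface.2.2.1 _ habs3.2 _ (inv_nonneg.2 hd)
          rwa [smul_smul, inv_mul_cancel₀ hdne, one_smul] at h1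
        -- then w0 ∈ span {v}, contradiction
        apply hwv
        rw [hray] at hvρ
        obtain ⟨e, he, hev⟩ := hvρ
        have he0 : e ≠ 0 := by
          rintro rfl
          rw [zero_smul] at hev
          exact v_ne_zero hu hfull hsc hv hn hev
        rw [Submodule.mem_span_singleton]
        exact ⟨e⁻¹, by rw [hev, smul_smul, inv_mul_cancel₀ he0, one_smul]⟩
      -- a + b - c - d = 0
      have he0 : a + b - c - d = 0 := by
        by_contra hne
        apply v_not_mem_span_facet hu hfull hsc hv hn hμ
        have hin : (a + b - c - d) • v ∈ Submodule.span ℝ μ := by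
          rw [hkey]
          exact Submodule.sub_mem _ (Submodule.sub_mem _ (hμspan hm3) (hμspan hm1))
            (hμspan hm2)
        have := Submodule.smul_mem (Submodule.span ℝ μ) (a + b - c - d)⁻¹ hin
        rwa [smul_smul, inv_mul_cancel₀ hne, one_smul] at this
      have hm3sum : m3 = m1 + m2 := by
        rw [he0, zero_smul] at hkey
        have h2 : m3 - (m1 + m2) = 0 := by rw [← sub_sub]; exact hkey.symm
        exact sub_eq_zero.1 h2
      have hm3ρ : m3 ∈ ρ := habs3.1
      have habs12 := hρface.2.2.2 m1 (hμsub hm1) m2 (hμsub hm2) (hm3sum ▸ hm3ρ)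
      exact ⟨⟨m1, habs12.1, a, ha, hxe⟩, ⟨m2, habs12.2, b, hb, hye⟩⟩
  have hτmem : τρ ∈ starSubdiv u v := ⟨μ, hμ, hτface⟩
  have hvsub : coneGen {v} ⊆ τρ := by
    intro x hx
    rw [coneGen_singleton] at hx
    obtain ⟨c, hc, rfl⟩ := hx
    exact ⟨0, h0ρ, c, hc, by simp⟩
  have himg : (Submodule.span ℝ {v}).mkQ '' τρ = (Submodule.span ℝ {v}).mkQ '' ρ := by
    apply Set.Subset.antisymm
    · rintro _ ⟨x, ⟨r, hr, c, hc, rfl⟩, rfl⟩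
      refine ⟨r, hr, ?_⟩
      rw [map_add, mkQ_v_smul_zero, add_zero]
    · exact Set.image_mono hρsubτ
  refine ⟨⟨τρ, hτmem, hvsub, himg.symm⟩, ?_⟩
  have hq0 : (Submodule.span ℝ {v}).mkQ w0 ≠ 0 := by
    intro h
    rw [Submodule.mkQ_apply, Submodule.Quotient.mk_eq_zero] at h
    exact hwv h
  have hspan : Submodule.span ℝ ((Submodule.span ℝ {v}).mkQ '' ρ)
      = Submodule.span ℝ {(Submodule.span ℝ {v}).mkQ w0} := by
    apply le_antisymm
    · rw [Submodule.span_le]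
      rintro _ ⟨x, hx, rfl⟩
      rw [hray] at hx
      obtain ⟨c, hc, rfl⟩ := hx
      rw [map_smul]
      exact Submodule.smul_mem _ c (Submodule.subset_span rfl)
    · exact Submodule.span_mono (Set.singleton_subset_iff.2 ⟨w0, hw0ρ, rfl⟩)
  rw [hspan, finrank_span_singleton hq0]

end Main
end Stmt2Aux

open Stmt2Aux

/-- Let `σ*` be the star subdivision of a cone `σ` with respect to
`v = Star(σ)`, and let `ρ_v` be the ray through `v`.  A collection `C` of rays of `σ*`,
all distinct from `ρ_v`, is a primitive collection of `σ*` if and only if the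
corresponding collection of rays (the images under `N_ℝ → N_ℝ/⟨v⟩`) in the star fan
`Star(ρ_v)` is a primitive collection. -/

theorem stmt_2 {n k : ℕ} (u : Fin k → (Fin n → ℝ)) (hu : ∀ i, u i ≠ 0)
    (σ : Set (Fin n → ℝ)) (hσ : σ = coneGen (Set.range u))
    (hfull : Submodule.span ℝ (Set.range u) = ⊤)
    (hstronglyconvex : ∀ x ∈ σ, -x ∈ σ → x = 0)
    (v : Fin n → ℝ) (hv : v = ∑ i, u i)
    (C : Set (Set (Fin n → ℝ)))
    (hC : C ⊆ raysOf (starSubdiv u v)) (hCv : coneGen {v} ∉ C) :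
    IsPrimitiveCollection (starSubdiv u v) C ↔
      IsPrimitiveCollection (starFanOf u v)
        ((fun ρ => (Submodule.span ℝ {v}).mkQ '' ρ) '' C) := by
  subst hσ
  have hsc := hstronglyconvex
  constructor
  · rintro ⟨hC1, hC2, hC3⟩
    refine ⟨?_, ?_, ?_⟩
    · rintro _ ⟨ρ, hρC, rfl⟩
      exact image_ray_mem hu hfull hsc hv (hC hρC) (fun h => hCv (h ▸ hρC))
    · rintro ⟨w, hw, hcon⟩
      obtain ⟨τ, hτ, hvτ, rfl⟩ := hw
      apply hC2
      refine ⟨τ, hτ, fun ρ hρC => ?_⟩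
      exact ray_subset_of_image_subset hu hfull hsc hv (hC hρC) hτ hvτ
        (hcon _ ⟨ρ, hρC, rfl⟩)
    · intro D' hD'
      have hD : ({ρ | ρ ∈ C ∧ (Submodule.span ℝ {v}).mkQ '' ρ ∈ D'} : Set (Set (Fin n → ℝ)))
          = {ρ | ρ ∈ C ∧ (Submodule.span ℝ {v}).mkQ '' ρ ∈ D'} := rfl
      have hDC : ({ρ | ρ ∈ C ∧ (Submodule.span ℝ {v}).mkQ '' ρ ∈ D'} : Set (Set (Fin n → ℝ))) ⊂ C := by
        refine ⟨fun ρ hρ => hρ.1, ?_⟩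
        intro hCD
        apply hD'.2
        rintro _ ⟨ρ, hρC, rfl⟩
        exact (hCD hρC).2
      obtain ⟨τ, hτ, hcon⟩ := hC3 _ hDC
      obtain ⟨μ, hμ, hτface⟩ := hτ
      refine ⟨(Submodule.span ℝ {v}).mkQ '' coneGen (μ ∪ {v}),
        ⟨coneGen (μ ∪ {v}), bigK_mem hμ, rhov_subset_bigK, rfl⟩, ?_⟩
      rintro w hwD'
      obtain ⟨ρ, hρC, rfl⟩ := hD'.1 hwD'
      exact Set.image_mono ((hcon ρ ⟨hρC, hwD'⟩).trans hτface.1)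
  · rintro ⟨hG1, hG2, hG3⟩
    refine ⟨hC, ?_, ?_⟩
    · rintro ⟨τ, hτ, hcon⟩
      obtain ⟨μ, hμ, hτface⟩ := hτ
      apply hG2
      refine ⟨(Submodule.span ℝ {v}).mkQ '' coneGen (μ ∪ {v}),
        ⟨coneGen (μ ∪ {v}), bigK_mem hμ, rhov_subset_bigK, rfl⟩, ?_⟩
      rintro _ ⟨ρ, hρC, rfl⟩
      exact Set.image_mono ((hcon ρ hρC).trans hτface.1)
    · intro D hD
      have himsub : (fun ρ => (Submodule.span ℝ {v}).mkQ '' ρ) '' D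
          ⊂ (fun ρ => (Submodule.span ℝ {v}).mkQ '' ρ) '' C := by
        refine ⟨Set.image_mono hD.1, ?_⟩
        intro hsub
        obtain ⟨ρ0, hρ0C, hρ0D⟩ := Set.exists_of_ssubset hD
        obtain ⟨ρ1, hρ1D, heq⟩ := hsub ⟨ρ0, hρ0C, rfl⟩
        have hne0 : ρ0 ≠ coneGen {v} := fun h => hCv (h ▸ hρ0C)
        have hne1 : ρ1 ≠ coneGen {v} := fun h => hCv (h ▸ (hD.1 hρ1D))
        have heq' : ρ1 = ρ0 :=
          ray_image_inj hu hfull hsc hv (hC (hD.1 hρ1D)) (hC hρ0C) hne1 hne0 heq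
        exact hρ0D (heq' ▸ hρ1D)
      obtain ⟨w, hwG, hcon⟩ := hG3 _ himsub
      obtain ⟨τ, hτ, hvτ, rfl⟩ := hwG
      refine ⟨τ, hτ, fun ρ hρD => ?_⟩
      exact ray_subset_of_image_subset hu hfull hsc hv (hC (hD.1 hρD)) hτ hvτ
        (hcon _ ⟨ρ, hρD, rfl⟩)
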